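/- arXiv:math/0604253 — 6 statements merged into one kernel-verified Lean document; each statement's English description precedes it below -/
import Mathlib

section
/- The function p : ℝ → ℝ defined by p(x) = exp(-|x|) is positive definite: for any n and any real numbers x₁,…,xₙ, the symmetric n×n matrix with entries exp(-|xᵢ - xⱼ|) is positive semidefinite. -/
open MeasureTheory Set

lemma min_kernel_nonneg {n : ℕ} (v b : Fin n → ℝ) (hb : ∀ i, 0 ≤ b i) :
    0 ≤ ∑ i, ∑ j, v i * v j * min (b i) (b j) := by
  set f : Fin n → ℝ → ℝ := fun i => (Set.Ioo (0:ℝ) (b i)).indicator 1 with hf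
  have hint : ∀ i j : Fin n,
      Integrable (fun t => v i * v j * (f i t * f j t)) := by
    intro i j
    apply Integrable.const_mul
    have : (fun t => f i t * f j t)
        = (Set.Ioo (0:ℝ) (min (b i) (b j))).indicator 1 := by
      funext t
      simp only [hf, Set.indicator, Pi.one_apply, Set.mem_Ioo, lt_min_iff]
      by_cases h0 : 0 < t
      · by_cases hi : t < b i <;> by_cases hj : t < b j <;> simp [h0, hi, hj]
      · simp [h0]
    rw [this, integrable_indicator_iff measurableSet_Ioo]
    exact integrableOn_const (by simp [Real.volume_Ioo, ENNReal.ofReal_lt_top]) (by simp)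
  have hkey : ∀ i j : Fin n,
      min (b i) (b j) = ∫ t, f i t * f j t := by
    intro i j
    have h1 : (fun t => f i t * f j t)
        = (Set.Ioo (0:ℝ) (min (b i) (b j))).indicator 1 := by
      funext t
      simp only [hf, Set.indicator, Pi.one_apply, Set.mem_Ioo, lt_min_iff]
      by_cases h0 : 0 < t
      · by_cases hi : t < b i <;> by_cases hj : t < b j <;> simp [h0, hi, hj]
      · simp [h0]
    rw [h1, MeasureTheory.integral_indicator_one measurableSet_Ioo,
      Real.volume_real_Ioo_of_le]
    · simp
    · simp [le_min (hb i) (hb j)]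
  calc (0:ℝ) ≤ ∫ t, (∑ i, v i * f i t) ^ 2 :=
        integral_nonneg fun t => sq_nonneg _
    _ = ∑ i, ∑ j, v i * v j * min (b i) (b j) := by
        have : (fun t => (∑ i, v i * f i t) ^ 2)
            = fun t => ∑ i, ∑ j, v i * v j * (f i t * f j t) := by
          funext t
          rw [sq, Finset.sum_mul_sum]
          exact Finset.sum_congr rfl fun i _ => Finset.sum_congr rfl fun j _ => by ring
        rw [this, MeasureTheory.integral_finset_sum _ fun i _ =>
          MeasureTheory.integrable_finset_sum _ fun j _ => hint i j]
        refine Finset.sum_congr rfl fun i _ => ?_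
        rw [MeasureTheory.integral_finset_sum _ fun j _ => hint i j]
        refine Finset.sum_congr rfl fun j _ => ?_
        rw [MeasureTheory.integral_const_mul, ← hkey i j]

theorem exp_neg_abs_posDef (n : ℕ) (x : Fin n → ℝ) :
    (Matrix.of fun i j => Real.exp (-|x i - x j|)).PosSemidef := by
  rw [Matrix.posSemidef_iff_dotProduct_mulVec]
  constructor
  · ext i j
    simp [Matrix.conjTranspose, abs_sub_comm]
  · intro v
    have hdecomp : ∀ i j : Fin n, Real.exp (-|x i - x j|)
        = Real.exp (-(x i)) * Real.exp (-(x j)) * min (Real.exp (2 * x i)) (Real.exp (2 * x j)) := by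
      intro i j
      rcases le_total (x i) (x j) with h | h
      · rw [min_eq_left (Real.exp_le_exp.2 (by linarith)), ← Real.exp_add, ← Real.exp_add,
          abs_of_nonpos (by linarith)]
        ring_nf
      · rw [min_eq_right (Real.exp_le_exp.2 (by linarith)), ← Real.exp_add, ← Real.exp_add,
          abs_of_nonneg (by linarith)]
        ring_nf
    have := min_kernel_nonneg (fun i => v i * Real.exp (-(x i)))
      (fun i => Real.exp (2 * x i)) (fun i => (Real.exp_pos _).le)
    simp only [dotProduct, Matrix.mulVec, dotProduct, Matrix.of_apply,
      Pi.star_apply, star_trivial]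
    calc (0:ℝ) ≤ ∑ i, ∑ j, (v i * Real.exp (-(x i))) * (v j * Real.exp (-(x j)))
          * min (Real.exp (2 * x i)) (Real.exp (2 * x j)) := this
      _ = ∑ i, v i * ∑ j, Real.exp (-|x i - x j|) * v j := by
          refine Finset.sum_congr rfl fun i _ => ?_
          rw [Finset.mul_sum]
          refine Finset.sum_congr rfl fun j _ => ?_
          rw [hdecomp i j]; ring
end

section
/- For any n and any vectors x₁,…,xₘ in ℝⁿ, the m×m matrix with entries exp(-‖xᵢ - xⱼ‖₁), where ‖·‖₁ denotes the ℓ¹ norm on ℝⁿ, is positive semidefinite. -/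
open MeasureTheory Matrix

/-- quadratic form of the `min` kernel is nonnegative (Gram via L² indicators). -/
lemma min_qform_nonneg (m : ℕ) (u v : Fin m → ℝ) (hu : ∀ i, 0 ≤ u i) :
    0 ≤ ∑ i, ∑ j, v i * v j * min (u i) (u j) := by
  set g : Fin m → ℝ → ℝ := fun i t => v i * (Set.Ioo (0:ℝ) (u i)).indicator 1 t with hg
  have hprod : ∀ i j, (fun t => g i t * g j t)
      = fun t => v i * v j * (Set.Ioo (0:ℝ) (min (u i) (u j))).indicator 1 t := by
    intro i j
    funext t
    have : (Set.Ioo (0:ℝ) (u i) ∩ Set.Ioo (0:ℝ) (u j)) = Set.Ioo (0:ℝ) (min (u i) (u j)) := by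
      rw [Set.Ioo_inter_Ioo, max_self]
    rw [← this, Set.inter_indicator_one]
    simp [g]
    ring
  have hint : ∀ i j : Fin m, Integrable (fun t => g i t * g j t) := by
    intro i j
    rw [hprod i j]
    apply Integrable.const_mul
    rw [integrable_indicator_iff measurableSet_Ioo]
    exact (integrableOn_const_iff (by simp)).mpr (Or.inr (by simp [Real.volume_Ioo]))
  have hval : ∀ i j : Fin m, ∫ t, g i t * g j t = v i * v j * min (u i) (u j) := by
    intro i j
    rw [hprod i j]
    rw [integral_const_mul]
    have : ∫ t, (Set.Ioo (0:ℝ) (min (u i) (u j))).indicator (1 : ℝ → ℝ) t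
        = (volume (Set.Ioo (0:ℝ) (min (u i) (u j)))).toReal • (1:ℝ) := by
      exact integral_indicator_const (1:ℝ) measurableSet_Ioo
    rw [this, Real.volume_Ioo, smul_eq_mul, mul_one]
    rw [ENNReal.toReal_ofReal_eq_iff.mpr]
    · ring_nf
    · simp [le_min (hu i) (hu j)]
  have key : ∑ i, ∑ j, v i * v j * min (u i) (u j) = ∫ t, (∑ i, g i t)^2 := by
    have : ∀ t, (∑ i, g i t)^2 = ∑ i, ∑ j, g i t * g j t := by
      intro t
      rw [sq, Finset.sum_mul_sum]
    simp_rw [this]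
    rw [integral_finset_sum _ (fun i _ => integrable_finset_sum _ (fun j _ => hint i j))]
    congr 1
    funext i
    rw [integral_finset_sum _ (fun j _ => hint i j)]
    congr 1
    funext j
    exact (hval i j).symm
  rw [key]
  exact integral_nonneg fun t => sq_nonneg _

/-- Schur product theorem for real matrices. -/
lemma schur_product_posSemidef (m : ℕ) {A B : Matrix (Fin m) (Fin m) ℝ}
    (hA : A.PosSemidef) (hB : B.PosSemidef) :
    (Matrix.of fun i j => A i j * B i j).PosSemidef := by
  obtain ⟨C, hC⟩ : ∃ C : Matrix (Fin m) (Fin m) ℝ, B = Cᴴ * C := by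
    open scoped MatrixOrder in exact CStarAlgebra.nonneg_iff_eq_star_mul_self.mp hB.nonneg
  have hBentry : ∀ i j, B i j = ∑ l, C l i * C l j := by
    intro i j
    rw [hC]
    simp [Matrix.mul_apply, Matrix.conjTranspose_apply]
  have hswap : ∀ f : Fin m → Fin m → Fin m → ℝ,
      ∑ i, ∑ j, ∑ l, f i j l = ∑ l, ∑ i, ∑ j, f i j l := by
    intro f
    have h1 : ∀ i : Fin m, ∑ j, ∑ l, f i j l = ∑ l, ∑ j, f i j l :=
      fun i => Finset.sum_comm
    simp_rw [h1]
    exact Finset.sum_comm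
  rw [Matrix.posSemidef_iff_dotProduct_mulVec]; constructor
  · show _ᴴ = _
    ext i j
    simp only [Matrix.conjTranspose_apply, Matrix.of_apply, star_trivial]
    rw [← hA.1.apply i j, ← hB.1.apply i j, star_trivial, star_trivial]
  · intro v
    have hq : ∀ w : Fin m → ℝ, (0:ℝ) ≤ ∑ i, ∑ j, w i * (A i j * w j) := by
      intro w
      have h0 := hA.dotProduct_mulVec_nonneg w
      simpa [dotProduct, Matrix.mulVec, Finset.mul_sum] using h0
    have key : star v ⬝ᵥ (Matrix.of fun i j => A i j * B i j) *ᵥ v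
        = ∑ l, ∑ i, ∑ j, (C l i * v i) * (A i j * (C l j * v j)) := by
      simp only [dotProduct, Matrix.mulVec, Matrix.of_apply, Pi.star_apply,
        star_trivial]
      rw [← hswap]
      refine Finset.sum_congr rfl fun i _ => ?_
      rw [Finset.mul_sum]
      refine Finset.sum_congr rfl fun j _ => ?_
      rw [hBentry i j]
      simp_rw [Finset.mul_sum, Finset.sum_mul]
      rw [Finset.mul_sum]
      exact Finset.sum_congr rfl fun l _ => by ring
    rw [key]
    exact Finset.sum_nonneg fun l _ => hq _

/-- The all-pairs-min matrix of nonnegative reals is PSD. -/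
lemma min_posSemidef (m : ℕ) (u : Fin m → ℝ) (hu : ∀ i, 0 ≤ u i) :
    (Matrix.of fun i j => min (u i) (u j)).PosSemidef := by
  rw [Matrix.posSemidef_iff_dotProduct_mulVec]; constructor
  · show _ᴴ = _
    ext i j
    simp [Matrix.conjTranspose_apply, min_comm]
  · intro v
    have := min_qform_nonneg m u v hu
    simpa [dotProduct, Matrix.mulVec, Finset.mul_sum, mul_assoc, mul_comm, mul_left_comm]
      using this

/-- rank-one matrices e i * e j are PSD. -/
lemma rank_one_posSemidef (m : ℕ) (e : Fin m → ℝ) :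
    (Matrix.of fun i j => e i * e j).PosSemidef := by
  rw [Matrix.posSemidef_iff_dotProduct_mulVec]; constructor
  · show _ᴴ = _
    ext i j
    simp [Matrix.conjTranspose_apply, mul_comm]
  · intro v
    have : star v ⬝ᵥ (Matrix.of fun i j => e i * e j) *ᵥ v = (∑ i, v i * e i)^2 := by
      rw [sq, Finset.sum_mul_sum]
      simp only [dotProduct, Matrix.mulVec, Matrix.of_apply, star_trivial, Pi.star_apply,
        Finset.mul_sum]
      congr 1; funext i; congr 1; funext j; ring
    rw [this]
    exact sq_nonneg _

/-- The 1-dimensional Laplace kernel is PSD. -/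
lemma exp_abs_posSemidef (m : ℕ) (s : Fin m → ℝ) :
    (Matrix.of fun i j => Real.exp (-|s i - s j|)).PosSemidef := by
  have hentry : ∀ i j, Real.exp (-|s i - s j|)
      = (Real.exp (-s i) * Real.exp (-s j)) * min (Real.exp (2 * s i)) (Real.exp (2 * s j)) := by
    intro i j
    have hmin : min (Real.exp (2 * s i)) (Real.exp (2 * s j)) = Real.exp (2 * min (s i) (s j)) := by
      rcases le_total (s i) (s j) with h | h
      · rw [min_eq_left h, min_eq_left (Real.exp_le_exp.mpr (by linarith))]
      · rw [min_eq_right h, min_eq_right (Real.exp_le_exp.mpr (by linarith))]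
    rw [hmin, ← Real.exp_add, ← Real.exp_add]
    congr 1
    rcases le_total (s i) (s j) with h | h
    · rw [min_eq_left h, abs_of_nonpos (by linarith)]; ring
    · rw [min_eq_right h, abs_of_nonneg (by linarith)]; ring
  have : (Matrix.of fun i j => Real.exp (-|s i - s j|))
      = Matrix.of fun i j => (Matrix.of fun i j => Real.exp (-s i) * Real.exp (-s j)) i j *
          (Matrix.of fun i j => min (Real.exp (2 * s i)) (Real.exp (2 * s j))) i j := by
    funext i j
    simp [hentry i j]
  rw [this]
  exact schur_product_posSemidef m (rank_one_posSemidef m _)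
    (min_posSemidef m _ fun i => (Real.exp_pos _).le)

theorem exp_neg_l1_norm_posSemidef (n m : ℕ) (x : Fin m → Fin n → ℝ) :
    (Matrix.of fun i j => Real.exp (-(∑ k, |x i k - x j k|))).PosSemidef := by
  have hrw : (Matrix.of fun i j => Real.exp (-(∑ k, |x i k - x j k|)))
      = Matrix.of fun i j => ∏ k, Real.exp (-|x i k - x j k|) := by
    funext i j
    simp only [Matrix.of_apply, ← Real.exp_sum, ← Finset.sum_neg_distrib]
  rw [hrw]
  induction (Finset.univ : Finset (Fin n)) using Finset.induction with
  | empty =>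
      simp only [Finset.prod_empty]
      have : (Matrix.of fun (_ _ : Fin m) => (1:ℝ)) = Matrix.of fun i j => (1:ℝ) * 1 := by
        funext i j; simp
      rw [this]
      exact rank_one_posSemidef m 1
  | insert k t hk ih =>
      have : (Matrix.of fun i j => ∏ l ∈ insert k t, Real.exp (-|x i l - x j l|))
          = Matrix.of fun i j =>
              (Matrix.of fun i j => Real.exp (-|x i k - x j k|)) i j *
              (Matrix.of fun i j => ∏ l ∈ t, Real.exp (-|x i l - x j l|)) i j := by
        funext i j
        simp [Finset.prod_insert hk]
      rw [this]
      exact schur_product_posSemidef m (exp_abs_posSemidef m fun i => x i k) ih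
end

section
/- For any measure space (Ω, μ) and any finite family f₁,…,fₙ of real-valued integrable functions, the n×n matrix with entries exp(-‖fᵢ - fⱼ‖₁), where ‖·‖₁ is the L¹ norm, is positive semidefinite. -/
open MeasureTheory

section helpers

variable {n : ℕ}

lemma quadform_eq (M : Matrix (Fin n) (Fin n) ℝ) (x : Fin n → ℝ) :
    dotProduct (star x) (M.mulVec x) = ∑ i, ∑ j, x i * x j * M i j := by
  simp only [dotProduct, Matrix.mulVec, Pi.star_apply, star_trivial, Finset.mul_sum]
  exact Finset.sum_congr rfl fun i _ => Finset.sum_congr rfl fun j _ => by ring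

lemma psd_of_form {M : Matrix (Fin n) (Fin n) ℝ} (hsym : ∀ i j, M i j = M j i)
    (h : ∀ c : Fin n → ℝ, 0 ≤ ∑ i, ∑ j, c i * c j * M i j) : M.PosSemidef := by
  refine Matrix.PosSemidef.of_dotProduct_mulVec_nonneg ?_ fun x => by rw [quadform_eq]; exact h x
  ext i j
  simp [Matrix.conjTranspose_apply, hsym i j]

lemma form_nonneg {M : Matrix (Fin n) (Fin n) ℝ} (hM : M.PosSemidef) (c : Fin n → ℝ) :
    0 ≤ ∑ i, ∑ j, c i * c j * M i j := by
  have := hM.dotProduct_mulVec_nonneg c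
  rwa [quadform_eq] at this

lemma schur_psd {M N : Matrix (Fin n) (Fin n) ℝ} (hM : M.PosSemidef) (hN : N.PosSemidef) :
    (Matrix.of fun i j => M i j * N i j).PosSemidef := by
  obtain ⟨C, hC⟩ : ∃ C : Matrix (Fin n) (Fin n) ℝ, N = C.conjTranspose * C := by
    open scoped MatrixOrder in
    exact CStarAlgebra.nonneg_iff_eq_star_mul_self.mp hN.nonneg
  have hNij : ∀ i j, N i j = ∑ k, C k i * C k j := by
    intro i j
    rw [hC]
    simp [Matrix.mul_apply, Matrix.conjTranspose_apply]
  have hMsym : ∀ i j, M i j = M j i := fun i j => by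
    have := hM.1.apply i j
    simpa using this.symm
  have hNsym : ∀ i j, N i j = N j i := fun i j => by
    have := hN.1.apply i j
    simpa using this.symm
  apply psd_of_form
  · intro i j
    simp only [Matrix.of_apply]
    rw [hMsym i j, hNsym i j]
  · intro c
    have key : ∑ i, ∑ j, c i * c j * (Matrix.of fun i j => M i j * N i j) i j
        = ∑ k, ∑ i, ∑ j, (c i * C k i) * (c j * C k j) * M i j := by
      calc ∑ i, ∑ j, c i * c j * (Matrix.of fun i j => M i j * N i j) i j
          = ∑ i, ∑ j, ∑ k, (c i * C k i) * (c j * C k j) * M i j := by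
            refine Finset.sum_congr rfl fun i _ => Finset.sum_congr rfl fun j _ => ?_
            simp only [Matrix.of_apply]
            rw [hNij i j, Finset.mul_sum, Finset.mul_sum]
            exact Finset.sum_congr rfl fun k _ => by ring
        _ = ∑ i, ∑ k, ∑ j, (c i * C k i) * (c j * C k j) * M i j := by
            exact Finset.sum_congr rfl fun i _ => Finset.sum_comm
        _ = ∑ k, ∑ i, ∑ j, (c i * C k i) * (c j * C k j) * M i j := Finset.sum_comm
    rw [key]
    exact Finset.sum_nonneg fun k _ => form_nonneg hM fun i => c i * C k i

lemma ones_psd : (Matrix.of fun _ _ : Fin n => (1 : ℝ)).PosSemidef := by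
  refine psd_of_form (fun i j => rfl) fun c => ?_
  have : ∑ i, ∑ j, c i * c j * (Matrix.of fun _ _ : Fin n => (1 : ℝ)) i j
      = (∑ i, c i) * (∑ j, c j) := by
    rw [Finset.sum_mul_sum]
    exact Finset.sum_congr rfl fun i _ => Finset.sum_congr rfl fun j _ => by
      simp
  rw [this]
  exact mul_self_nonneg _

lemma hadamard_pow_psd {M : Matrix (Fin n) (Fin n) ℝ} (hM : M.PosSemidef) (m : ℕ) :
    (Matrix.of fun i j => M i j ^ m).PosSemidef := by
  induction m with
  | zero => simpa using ones_psd (n := n)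
  | succ m ih =>
      have h : (Matrix.of fun i j => M i j ^ (m + 1))
          = Matrix.of fun i j => (Matrix.of fun i j => M i j ^ m) i j * M i j := by
        ext i j
        simp [pow_succ]
      rw [h]
      exact schur_psd ih hM

lemma min_form_nonneg (s : Fin n → ℝ) (hs : ∀ i, 0 ≤ s i) (c : Fin n → ℝ) :
    0 ≤ ∑ i, ∑ j, c i * c j * min (s i) (s j) := by
  classical
  set g : Fin n → ℝ → ℝ := fun i => (Set.Ioc 0 (s i)).indicator (fun _ => c i) with hg
  have hprod : ∀ i j, (fun t => g i t * g j t)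
      = (Set.Ioc 0 (min (s i) (s j))).indicator (fun _ => c i * c j) := by
    intro i j
    funext t
    rw [hg]
    simp only
    rw [← Set.inter_indicator_mul, Set.Ioc_inter_Ioc, max_self]
  have hintprod : ∀ i j, Integrable (fun t => g i t * g j t) := by
    intro i j
    rw [hprod i j]
    exact (integrable_indicator_iff measurableSet_Ioc).mpr
      (integrableOn_const measure_Ioc_lt_top.ne)
  have key : ∀ i j, (∫ t, g i t * g j t) = c i * c j * min (s i) (s j) := by
    intro i j
    rw [hprod i j, integral_indicator measurableSet_Ioc, setIntegral_const,
      Real.volume_real_Ioc, smul_eq_mul, max_eq_left (by simpa using le_min (hs i) (hs j))]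
    ring
  have h1 : (0:ℝ) ≤ ∫ t, (∑ i, g i t) ^ 2 := integral_nonneg fun t => sq_nonneg _
  have h2 : (∫ t, (∑ i, g i t) ^ 2) = ∑ i, ∑ j, c i * c j * min (s i) (s j) := by
    have hexp : (fun t => (∑ i, g i t) ^ 2) = fun t => ∑ i, ∑ j, g i t * g j t := by
      funext t
      rw [sq, Finset.sum_mul_sum]
    rw [hexp, integral_finset_sum _ (fun i _ => integrable_finset_sum _ fun j _ => hintprod i j)]
    refine Finset.sum_congr rfl fun i _ => ?_
    rw [integral_finset_sum _ fun j _ => hintprod i j]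
    exact Finset.sum_congr rfl fun j _ => key i j
  rw [← h2]
  exact h1

set_option maxHeartbeats 1000000 in
lemma abs_id (a b : ℝ) : |a| + |b| - |a - b|
    = 2 * min (max a 0) (max b 0) + 2 * min (max (-a) 0) (max (-b) 0) := by
  simp only [abs_eq_max_neg, max_def, min_def]
  split_ifs <;> linarith

lemma abs_form_nonneg (x : Fin n → ℝ) (c : Fin n → ℝ) :
    0 ≤ ∑ i, ∑ j, c i * c j * (|x i| + |x j| - |x i - x j|) := by
  have hA := min_form_nonneg (fun i => max (x i) 0) (fun i => le_max_right _ _) c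
  have hB := min_form_nonneg (fun i => max (-(x i)) 0) (fun i => le_max_right _ _) c
  have hS : ∑ i, ∑ j, c i * c j * (|x i| + |x j| - |x i - x j|)
      = 2 * (∑ i, ∑ j, c i * c j * min (max (x i) 0) (max (x j) 0))
        + 2 * (∑ i, ∑ j, c i * c j * min (max (-(x i)) 0) (max (-(x j)) 0)) := by
    rw [Finset.mul_sum, Finset.mul_sum, ← Finset.sum_add_distrib]
    refine Finset.sum_congr rfl fun i _ => ?_
    rw [Finset.mul_sum, Finset.mul_sum, ← Finset.sum_add_distrib]
    refine Finset.sum_congr rfl fun j _ => ?_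
    rw [abs_id]
    ring
  rw [hS]
  positivity

end helpers

theorem exp_neg_L1_dist_posSemidef {Ω : Type*} [MeasurableSpace Ω]
    (μ : Measure Ω) (n : ℕ) (f : Fin n → Ω → ℝ)
    (hf : ∀ i, Integrable (f i) μ) :
    (Matrix.of fun i j =>
      Real.exp (-(∫ ω, |f i ω - f j ω| ∂μ))).PosSemidef := by
  classical
  set d : Fin n → Fin n → ℝ := fun i j => ∫ ω, |f i ω - f j ω| ∂μ with hd
  set e : Fin n → ℝ := fun i => ∫ ω, |f i ω| ∂μ with he
  have hdsym : ∀ i j, d i j = d j i := by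
    intro i j
    rw [hd]
    simp only
    congr 1
    funext ω
    exact abs_sub_comm _ _
  -- the base kernel B is psd
  have hBpsd : (Matrix.of fun i j => e i + e j - d i j).PosSemidef := by
    apply psd_of_form
    · intro i j
      simp only [Matrix.of_apply]
      rw [hdsym i j]
      ring
    · intro c
      have hint : ∀ i j : Fin n, Integrable
          (fun ω => c i * c j * (|f i ω| + |f j ω| - |f i ω - f j ω|)) μ :=
        fun i j => ((((hf i).abs.add (hf j).abs).sub ((hf i).sub (hf j)).abs)).const_mul _
      have hswap : ∑ i, ∑ j, c i * c j * (Matrix.of fun i j => e i + e j - d i j) i j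
          = ∫ ω, ∑ i, ∑ j, c i * c j * (|f i ω| + |f j ω| - |f i ω - f j ω|) ∂μ := by
        rw [integral_finset_sum _ (fun i _ => integrable_finset_sum _ fun j _ => hint i j)]
        refine Finset.sum_congr rfl fun i _ => ?_
        rw [integral_finset_sum _ fun j _ => hint i j]
        refine Finset.sum_congr rfl fun j _ => ?_
        rw [integral_const_mul]
        simp only [Matrix.of_apply, hd, he]
        have h1 : Integrable (fun ω => |f i ω| + |f j ω|) μ := (hf i).abs.add (hf j).abs
        have h2 : Integrable (fun ω => |f i ω - f j ω|) μ := ((hf i).sub (hf j)).abs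
        have h3 : Integrable (fun ω => |f i ω|) μ := (hf i).abs
        have h4 : Integrable (fun ω => |f j ω|) μ := (hf j).abs
        rw [integral_sub h1 h2, integral_add h3 h4]
      rw [hswap]
      refine integral_nonneg fun ω => ?_
      have := abs_form_nonneg (fun i => f i ω) c
      simpa using this
  apply psd_of_form
  · intro i j
    exact congrArg (fun t => Real.exp (-t)) (hdsym i j)
  · intro c
    set a : Fin n → ℝ := fun i => c i * Real.exp (-(e i)) with ha
    set B : Fin n → Fin n → ℝ := fun i j => e i + e j - d i j with hBdef
    have hexp : ∀ x : ℝ, Real.exp x = ∑' m : ℕ, x ^ m / m.factorial := by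
      intro x
      rw [Real.exp_eq_exp_ℝ, NormedSpace.exp_eq_tsum_div]
    have hsumm : ∀ i j, Summable (fun m : ℕ => a i * a j * (B i j ^ m / m.factorial)) :=
      fun i j => (Real.summable_pow_div_factorial _).mul_left _
    have hterm : ∀ i j, c i * c j * (Matrix.of fun i j =>
        Real.exp (-(∫ ω, |f i ω - f j ω| ∂μ))) i j
        = ∑' m : ℕ, a i * a j * (B i j ^ m / m.factorial) := by
      intro i j
      rw [tsum_mul_left, ← hexp]
      simp only [Matrix.of_apply, ha, hBdef]
      rw [show -(∫ ω, |f i ω - f j ω| ∂μ) = (-(e i)) + ((-(e j)) + (e i + e j - d i j)) by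
        rw [hd]; ring, Real.exp_add, Real.exp_add]
      ring
    calc ∑ i, ∑ j, c i * c j * (Matrix.of fun i j =>
          Real.exp (-(∫ ω, |f i ω - f j ω| ∂μ))) i j
        = ∑ i, ∑ j, ∑' m : ℕ, a i * a j * (B i j ^ m / m.factorial) := by
          exact Finset.sum_congr rfl fun i _ => Finset.sum_congr rfl fun j _ => hterm i j
      _ = ∑ i, ∑' m : ℕ, ∑ j, a i * a j * (B i j ^ m / m.factorial) := by
          exact Finset.sum_congr rfl fun i _ => (Summable.tsum_finsetSum fun j _ => hsumm i j).symm
      _ = ∑' m : ℕ, ∑ i, ∑ j, a i * a j * (B i j ^ m / m.factorial) := by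
          exact (Summable.tsum_finsetSum fun i _ => summable_sum fun j _ => hsumm i j).symm
      _ ≥ 0 := by
          refine tsum_nonneg fun m => ?_
          have h1 : ∑ i, ∑ j, a i * a j * (B i j ^ m / m.factorial)
              = (∑ i, ∑ j, a i * a j * (Matrix.of fun i j => B i j ^ m) i j) / m.factorial := by
            rw [Finset.sum_div]
            refine Finset.sum_congr rfl fun i _ => ?_
            rw [Finset.sum_div]
            refine Finset.sum_congr rfl fun j _ => ?_
            simp only [Matrix.of_apply]
            ring
          rw [h1]
          exact div_nonneg (form_nonneg (hadamard_pow_psd hBpsd m) a) (by positivity)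
end

section
/- Let p : E → F be a continuous linear surjection between Banach spaces. Then there exists a continuous (not necessarily linear) map s : F → E with p ∘ s = id on F. -/
open Set Metric Function Filter

/-- Continuous approximate section with relative error 1/3 and linear norm bound. -/
theorem approx_section {E F : Type*} [NormedAddCommGroup E] [NormedSpace ℝ E]
    [CompleteSpace E] [NormedAddCommGroup F] [NormedSpace ℝ F] [CompleteSpace F]
    (p : E →L[ℝ] F) (hp : Function.Surjective p) :
    ∃ C > 0, ∃ σ : F → E, Continuous σ ∧ (∀ y, ‖p (σ y) - y‖ ≤ (1/3) * ‖y‖) ∧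
      (∀ y, ‖σ y‖ ≤ C * ‖y‖) := by
  classical
  obtain ⟨C, hC0, hC⟩ := ContinuousLinearMap.exists_preimage_norm_le p hp
  choose g hg hgn using hC
  set X := {y : F // y ≠ 0}
  set U : X → Set X := fun i => {x : X | ‖x.1 - i.1‖ < ‖i.1‖/4} with hU
  have hUo : ∀ i, IsOpen (U i) := by
    intro i
    have : U i = Subtype.val ⁻¹' Metric.ball i.1 (‖i.1‖/4) := by
      ext x; simp [U, Metric.mem_ball, Subtype.dist_eq, dist_eq_norm]
      rw [show dist x i = ‖x.1 - i.1‖ from (Subtype.dist_eq x i).trans (dist_eq_norm _ _)]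
    rw [this]
    exact (Metric.isOpen_ball).preimage continuous_subtype_val
  have hcov : (univ : Set X) ⊆ ⋃ i, U i := by
    intro x _
    exact mem_iUnion.2 ⟨x, by simp [U, norm_pos_iff.2 x.2]⟩
  obtain ⟨f, hf⟩ := PartitionOfUnity.exists_isSubordinate isClosed_univ U hUo hcov
  set σ' : X → E := fun x => ∑ᶠ i, f i x • g i.1 with hσ'
  have hσ'c : Continuous σ' :=
    hf.continuous_finsum_smul hUo (fun i => continuousOn_const)
  set σ : F → E := fun y => if h : y = 0 then 0 else σ' ⟨y, h⟩ with hσdef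
  -- key pointwise estimates on X
  have key : ∀ x : X, ‖p (σ' x) - x.1‖ ≤ (1/3) * ‖x.1‖ ∧ ‖σ' x‖ ≤ (4*C/3) * ‖x.1‖ := by
    intro x
    have hsum1 : ∑ i ∈ f.finsupport x, f i x = 1 := f.sum_finsupport (mem_univ x)
    have hmem : ∀ i ∈ f.finsupport x, ‖x.1 - i.1‖ < ‖i.1‖/4 := by
      intro i hi
      have hx : x ∈ support fun j => f i j := by
        have := (f.mem_finsupport x).1 hi
        simpa using this
      have : x ∈ tsupport (f i) := subset_closure hx
      exact hf i this
    have hnorm_i : ∀ i ∈ f.finsupport x, ‖i.1‖ ≤ (4/3) * ‖x.1‖ := by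
      intro i hi
      have h1 := hmem i hi
      have h2 : ‖i.1‖ ≤ ‖x.1‖ + ‖i.1‖/4 := by
        calc ‖i.1‖ = ‖x.1 - (x.1 - i.1)‖ := by rw [sub_sub_cancel]
          _ ≤ ‖x.1‖ + ‖x.1 - i.1‖ := norm_sub_le _ _
          _ ≤ ‖x.1‖ + ‖i.1‖/4 := by linarith
      linarith
    have hdiff : ∀ i ∈ f.finsupport x, ‖i.1 - x.1‖ ≤ (1/3) * ‖x.1‖ := by
      intro i hi
      have := hmem i hi
      have h2 := hnorm_i i hi
      have : ‖i.1 - x.1‖ < ‖i.1‖/4 := by rwa [norm_sub_rev] at this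
      linarith
    have hσ'x : σ' x = ∑ i ∈ f.finsupport x, f i x • g i.1 := by
      rw [hσ']
      exact (f.sum_finsupport_smul_eq_finsum (fun i _ => g i.1)).symm
    constructor
    · have : p (σ' x) - x.1 = ∑ i ∈ f.finsupport x, f i x • (i.1 - x.1) := by
        rw [hσ'x, map_sum]
        simp only [map_smul, smul_sub]
        rw [Finset.sum_sub_distrib, ← Finset.sum_smul, hsum1, one_smul]
        congr 1
        · exact Finset.sum_congr rfl (fun i _ => by rw [hg])
      rw [this]
      calc ‖∑ i ∈ f.finsupport x, f i x • (i.1 - x.1)‖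
          ≤ ∑ i ∈ f.finsupport x, ‖f i x • (i.1 - x.1)‖ := norm_sum_le _ _
        _ ≤ ∑ i ∈ f.finsupport x, f i x * ((1/3) * ‖x.1‖) := by
            apply Finset.sum_le_sum
            intro i hi
            rw [norm_smul, Real.norm_of_nonneg (f.nonneg i x)]
            exact mul_le_mul_of_nonneg_left (hdiff i hi) (f.nonneg i x)
        _ = (1/3) * ‖x.1‖ := by rw [← Finset.sum_mul, hsum1, one_mul]
    · rw [hσ'x]
      calc ‖∑ i ∈ f.finsupport x, f i x • g i.1‖
          ≤ ∑ i ∈ f.finsupport x, ‖f i x • g i.1‖ := norm_sum_le _ _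
        _ ≤ ∑ i ∈ f.finsupport x, f i x * ((4*C/3) * ‖x.1‖) := by
            apply Finset.sum_le_sum
            intro i hi
            rw [norm_smul, Real.norm_of_nonneg (f.nonneg i x)]
            apply mul_le_mul_of_nonneg_left _ (f.nonneg i x)
            calc ‖g i.1‖ ≤ C * ‖i.1‖ := hgn i.1
              _ ≤ C * ((4/3) * ‖x.1‖) := by
                  exact mul_le_mul_of_nonneg_left (hnorm_i i hi) hC0.le
              _ = (4*C/3) * ‖x.1‖ := by ring
        _ = (4*C/3) * ‖x.1‖ := by rw [← Finset.sum_mul, hsum1, one_mul]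
  refine ⟨4*C/3, by positivity, σ, ?_, ?_, ?_⟩
  · -- continuity of σ
    rw [continuous_iff_continuousAt]
    intro y₀
    by_cases h0 : y₀ = 0
    · subst h0
      have hσ0 : σ 0 = 0 := by simp [σ]
      rw [ContinuousAt, hσ0]
      apply squeeze_zero_norm (a := fun y => (4*C/3) * ‖y‖) ?_ ?_
      · intro y
        by_cases h : y = 0
        · simp [σ, h]
        · simpa [σ, h] using (key ⟨y, h⟩).2
      · have : Filter.Tendsto (fun y : F => (4*C/3) * ‖y‖) (nhds 0) (nhds ((4*C/3) * ‖(0:F)‖)) :=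
          (continuous_const.mul continuous_norm).tendsto 0
        simpa using this
    · have hopen : IsOpen {y : F | y ≠ 0} := isOpen_ne
      have hco : ContinuousOn σ {y : F | y ≠ 0} := by
        rw [continuousOn_iff_continuous_restrict]
        have : ({y : F | y ≠ 0}.restrict σ) = fun x : {y : F | y ≠ 0} => σ' ⟨x.1, x.2⟩ := by
          funext x
          show (if h : (x.1 : F) = 0 then (0:E) else σ' ⟨x.1, h⟩) = _
          rw [dif_neg x.2]
        change Continuous ({y : F | y ≠ 0}.restrict σ)
        rw [this]
        exact hσ'c.comp (by fun_prop)
      exact hco.continuousAt (hopen.mem_nhds h0)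
  · intro y
    by_cases h : y = 0
    · simp [σ, h]
    · simpa [σ, h] using (key ⟨y, h⟩).1
  · intro y
    by_cases h : y = 0
    · simp [σ, h]
    · simpa [σ, h] using (key ⟨y, h⟩).2

/-- The Bartle–Graves theorem: a continuous linear surjection between Banach spaces
admits a continuous (not necessarily linear) right inverse. -/
theorem bartle_graves {E F : Type*} [NormedAddCommGroup E] [NormedSpace ℝ E]
    [CompleteSpace E] [NormedAddCommGroup F] [NormedSpace ℝ F] [CompleteSpace F]
    (p : E →L[ℝ] F) (hp : Function.Surjective p) :
    ∃ s : F → E, Continuous s ∧ ∀ y : F, p (s y) = y := by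
  obtain ⟨C, hC0, σ, hσc, hσ1, hσ2⟩ := approx_section p hp
  set T : F → F := fun y => y - p (σ y) with hT
  have hTc : Continuous T := continuous_id.sub (p.continuous.comp hσc)
  have hTn : ∀ y, ‖T y‖ ≤ (1/3) * ‖y‖ := by
    intro y
    have := hσ1 y
    simpa [T, norm_sub_rev] using this
  have hTiter : ∀ n y, ‖T^[n] y‖ ≤ (1/3)^n * ‖y‖ := by
    intro n
    induction n with
    | zero => intro y; simp
    | succ n ih =>
      intro y
      rw [Function.iterate_succ_apply']
      calc ‖T (T^[n] y)‖ ≤ (1/3) * ‖T^[n] y‖ := hTn _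
        _ ≤ (1/3) * ((1/3)^n * ‖y‖) := by
            apply mul_le_mul_of_nonneg_left (ih y) (by norm_num)
        _ = (1/3)^(n+1) * ‖y‖ := by ring
  have hTiterc : ∀ n, Continuous (fun y => T^[n] y) := fun n => hTc.iterate n
  set a : ℕ → F → E := fun n y => σ (T^[n] y) with ha
  have hac : ∀ n, Continuous (a n) := fun n => hσc.comp (hTiterc n)
  have habd : ∀ n y, ‖a n y‖ ≤ C * ((1/3)^n * ‖y‖) := by
    intro n y
    calc ‖σ (T^[n] y)‖ ≤ C * ‖T^[n] y‖ := hσ2 _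
      _ ≤ C * ((1/3)^n * ‖y‖) := mul_le_mul_of_nonneg_left (hTiter n y) hC0.le
  have hsummable : ∀ y, Summable (fun n => a n y) := by
    intro y
    apply Summable.of_norm_bounded (g := fun n => C * ((1/3)^n * ‖y‖))
    · apply Summable.mul_left
      apply Summable.mul_right
      exact summable_geometric_of_lt_one (by norm_num) (by norm_num)
    · exact fun n => habd n y
  set s : F → E := fun y => ∑' n, a n y with hs
  refine ⟨s, ?_, ?_⟩
  · -- continuity
    rw [continuous_iff_continuousAt]
    intro y₀
    set R := ‖y₀‖ + 1 with hR
    have hball : y₀ ∈ Metric.ball (0 : F) R := by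
      simp [R, Metric.mem_ball, dist_eq_norm]
    have hu : Summable (fun n => C * ((1/3)^n * R)) := by
      apply Summable.mul_left
      apply Summable.mul_right
      exact summable_geometric_of_lt_one (by norm_num) (by norm_num)
    have := tendstoUniformlyOn_tsum_nat hu (f := a) (s := Metric.ball (0 : F) R) ?_
    · have hcont : ContinuousOn s (Metric.ball (0 : F) R) := by
        apply this.continuousOn
        refine Filter.Frequently.of_forall (fun N => ?_)
        exact (continuous_finset_sum _ (fun n _ => hac n)).continuousOn
      exact hcont.continuousAt (Metric.isOpen_ball.mem_nhds hball)
    · intro n x hx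
      have hxR : ‖x‖ ≤ R := by
        rw [Metric.mem_ball, dist_eq_norm, sub_zero] at hx
        linarith
      calc ‖a n x‖ ≤ C * ((1/3)^n * ‖x‖) := habd n x
        _ ≤ C * ((1/3)^n * R) := by
            apply mul_le_mul_of_nonneg_left _ hC0.le
            apply mul_le_mul_of_nonneg_left hxR (by positivity)
  · -- p (s y) = y
    intro y
    have hps : p (s y) = ∑' n, p (a n y) := by
      rw [hs]
      exact ContinuousLinearMap.map_tsum p (hsummable y)
    rw [hps]
    have hpa : ∀ n, p (a n y) = T^[n] y - T^[n+1] y := by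
      intro n
      rw [Function.iterate_succ_apply']
      simp [T, a]
    have hsum2 : Summable (fun n => p (a n y)) := (hsummable y).map p p.continuous
    have hlim : Filter.Tendsto (fun n => T^[n] y) Filter.atTop (nhds 0) := by
      apply squeeze_zero_norm (a := fun n => (1/3)^n * ‖y‖) (fun n => hTiter n y)
      have : Filter.Tendsto (fun n : ℕ => (1/3 : ℝ)^n) Filter.atTop (nhds 0) :=
        tendsto_pow_atTop_nhds_zero_of_lt_one (by norm_num) (by norm_num)
      simpa using this.mul_const ‖y‖
    have htel : Filter.Tendsto (fun N => ∑ n ∈ Finset.range N, p (a n y))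
        Filter.atTop (nhds y) := by
      have heq : ∀ N, ∑ n ∈ Finset.range N, p (a n y) = y - T^[N] y := by
        intro N
        calc ∑ n ∈ Finset.range N, p (a n y)
            = ∑ n ∈ Finset.range N, (T^[n] y - T^[n+1] y) := by
              exact Finset.sum_congr rfl (fun n _ => hpa n)
          _ = T^[0] y - T^[N] y := Finset.sum_range_sub' (fun n => T^[n] y) N
          _ = y - T^[N] y := by simp
      simp_rw [heq]
      simpa using (tendsto_const_nhds (x := y)).sub hlim
    exact tendsto_nhds_unique (hsum2.hasSum.tendsto_sum_nat) htel
end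

section
/- For strictly positive reals m₁,…,mₙ, the function x ↦ exp(-Σₖ mₖ|xₖ|) on ℝⁿ is positive definite: for any vectors x⁽¹⁾,…,x⁽ᵐ⁾ ∈ ℝⁿ, the matrix with entries exp(-Σₖ mₖ|xᵢ⁽ᵏ⁾ - xⱼ⁽ᵏ⁾|) is positive semidefinite. -/
open MeasureTheory Set

/-- The quadratic form built from intersection measures of finite-measure
measurable sets is nonnegative (Gram matrix in L²). -/
lemma quadform_inter_nonneg {α : Type*} [MeasurableSpace α] (μ : Measure α)
    {M : ℕ} (B : Fin M → Set α) (hBm : ∀ i, MeasurableSet (B i))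
    (hBf : ∀ i, μ (B i) < ⊤) (w : Fin M → ℝ) :
    0 ≤ ∑ i, ∑ j, w i * w j * (μ (B i ∩ B j)).toReal := by
  have hint : ∀ i j : Fin M,
      Integrable (fun u => (w i * w j) * ((B i).indicator 1 u * (B j).indicator 1 u)) μ := by
    intro i j
    have : (fun u => (w i * w j) * ((B i).indicator 1 u * (B j).indicator 1 u))
        = (B i ∩ B j).indicator (fun _ => w i * w j) := by
      funext u
      by_cases hi : u ∈ B i <;> by_cases hj : u ∈ B j <;>
        simp [Set.indicator_apply, hi, hj]
    rw [this, integrable_indicator_iff ((hBm i).inter (hBm j))]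
    exact integrableOn_const (lt_of_le_of_lt (measure_mono inter_subset_left) (hBf i)).ne
  have key : ∑ i, ∑ j, w i * w j * (μ (B i ∩ B j)).toReal
      = ∫ u, (∑ i, w i * (B i).indicator 1 u) ^ 2 ∂μ := by
    have : ∀ u : α, (∑ i, w i * (B i).indicator 1 u) ^ 2
        = ∑ i, ∑ j, (w i * w j) * ((B i).indicator 1 u * (B j).indicator 1 u) := by
      intro u
      rw [sq, Finset.sum_mul_sum]
      apply Finset.sum_congr rfl; intro i _
      apply Finset.sum_congr rfl; intro j _
      ring
    simp_rw [this]
    rw [integral_finset_sum _ (fun i _ => integrable_finset_sum _ (fun j _ => hint i j))]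
    apply Finset.sum_congr rfl; intro i _
    rw [integral_finset_sum _ (fun j _ => hint i j)]
    apply Finset.sum_congr rfl; intro j _
    have : (fun u => (w i * w j) * ((B i).indicator 1 u * (B j).indicator 1 u))
        = (B i ∩ B j).indicator (fun _ => w i * w j) := by
      funext u
      by_cases hi : u ∈ B i <;> by_cases hj : u ∈ B j <;>
        simp [Set.indicator_apply, hi, hj]
    rw [this, integral_indicator_const _ ((hBm i).inter (hBm j))]
    simp [mul_comm, measureReal_def]
  rw [key]
  exact integral_nonneg fun u => sq_nonneg _

lemma abs_eq_add_sub_two_min (a b : ℝ) : |a - b| = a + b - 2 * min a b := by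
  rcases le_total a b with h | h
  · rw [min_eq_left h, abs_of_nonpos (by linarith)]; ring
  · rw [min_eq_right h, abs_of_nonneg (by linarith)]; ring

theorem exp_neg_weighted_l1_posSemidef (n M : ℕ) (m : Fin n → ℝ)
    (hm : ∀ k, 0 < m k) (x : Fin M → Fin n → ℝ) :
    (Matrix.of fun i j =>
      Real.exp (-(∑ k, m k * |x i k - x j k|))).PosSemidef := by
  set c : Fin M → ℝ := fun i => Real.exp (-(∑ k, m k * x i k)) with hc
  set s : Fin M → Fin n → ℝ := fun i k => Real.exp (2 * m k * x i k) with hs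
  set B : Fin M → Set (Fin n → ℝ) := fun i => Set.pi Set.univ fun k => Ioo 0 (s i k) with hB
  have hBm : ∀ i, MeasurableSet (B i) :=
    fun i => MeasurableSet.univ_pi fun k => measurableSet_Ioo
  have hBvol : ∀ i j : Fin M,
      (volume (B i ∩ B j)).toReal = ∏ k, min (s i k) (s j k) := by
    intro i j
    have hinter : B i ∩ B j = Set.pi Set.univ fun k => Ioo 0 (min (s i k) (s j k)) := by
      rw [hB, ← Set.pi_inter_distrib]
      apply Set.pi_congr rfl
      intro k _
      rw [Set.Ioo_inter_Ioo, max_self]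
    rw [hinter, volume_pi_pi]
    rw [ENNReal.toReal_prod]
    apply Finset.prod_congr rfl
    intro k _
    rw [Real.volume_Ioo, sub_zero, ENNReal.toReal_ofReal]
    exact le_min (Real.exp_pos _).le (Real.exp_pos _).le
  have hBf : ∀ i, volume (B i) < ⊤ := by
    intro i
    rw [hB, volume_pi_pi]
    refine ENNReal.prod_lt_top fun k _ => ?_
    rw [Real.volume_Ioo]
    exact ENNReal.ofReal_lt_top
  have hentry : ∀ i j : Fin M, Real.exp (-(∑ k, m k * |x i k - x j k|))
      = c i * c j * (volume (B i ∩ B j)).toReal := by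
    intro i j
    rw [hBvol i j]
    have hmin : ∀ k, min (s i k) (s j k) = Real.exp (2 * m k * min (x i k) (x j k)) := by
      intro k
      rcases le_total (x i k) (x j k) with h | h
      · rw [min_eq_left h, hs, min_eq_left]
        exact Real.exp_le_exp.2 (by nlinarith [hm k])
      · rw [min_eq_right h, hs, min_eq_right]
        exact Real.exp_le_exp.2 (by nlinarith [hm k])
    simp_rw [hmin]
    rw [← Real.exp_sum]
    simp only [hc]
    rw [← Real.exp_add, ← Real.exp_add]
    congr 1
    have habs : ∀ k ∈ Finset.univ, m k * |x i k - x j k|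
        = (m k * x i k + m k * x j k) - 2 * m k * min (x i k) (x j k) := fun k _ => by
      rw [abs_eq_add_sub_two_min]; ring
    rw [Finset.sum_congr rfl habs, Finset.sum_sub_distrib, Finset.sum_add_distrib]
    ring
  constructor
  · apply Matrix.IsHermitian.ext
    intro i j
    simp only [Matrix.conjTranspose_apply, Matrix.of_apply, star_trivial]
    congr 1
    congr 1
    apply Finset.sum_congr rfl
    intro k _
    rw [abs_sub_comm]
  · intro v
    have := quadform_inter_nonneg (volume : Measure (Fin n → ℝ)) B hBm hBf
      (fun i => v i * c i)
    simp only [Finsupp.sum_fintype, zero_mul, mul_zero, Finset.sum_const_zero, implies_true,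
      star_trivial, Matrix.of_apply]
    calc (0:ℝ) ≤ ∑ i, ∑ j, (v i * c i) * (v j * c j) * (volume (B i ∩ B j)).toReal := this
      _ = ∑ i, v i * ∑ j, Real.exp (-(∑ k, m k * |x i k - x j k|)) * v j := by
          apply Finset.sum_congr rfl; intro i _
          rw [Finset.mul_sum]
          apply Finset.sum_congr rfl; intro j _
          rw [hentry i j]; ring
        _ = ∑ i, ∑ j, v i * Real.exp (-(∑ k, m k * |x i k - x j k|)) * v j := by
            apply Finset.sum_congr rfl; intro i _
            rw [Finset.mul_sum]
            apply Finset.sum_congr rfl; intro j _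
            ring
end

section
/- The additive topological group of the Banach space ℓ¹(ℕ, ℝ) admits, for every ε > 0, a continuous positive definite function p with p(0) = 1 and |1 - p(f)| ≥ 1 - exp(-ε) whenever ‖f‖₁ ≥ ε; namely p(f) = exp(-‖f‖₁) works. -/
open MeasureTheory Finset
open scoped ENNReal

lemma ind_integrable (a : ℝ) :
    Integrable (Set.indicator (Set.Ioc 0 a) (1 : ℝ → ℝ)) volume := by
  rw [integrable_indicator_iff measurableSet_Ioc]
  exact integrableOn_const (C := (1 : ℝ)) (by rw [Real.volume_Ioc]; exact ENNReal.ofReal_ne_top)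

lemma ind_integral (a : ℝ) (ha : 0 ≤ a) :
    ∫ u, Set.indicator (Set.Ioc 0 a) (1 : ℝ → ℝ) u = a := by
  rw [Pi.one_def, integral_indicator_const (1 : ℝ) measurableSet_Ioc]
  simp [Real.volume_Ioc, ENNReal.toReal_ofReal ha, ha]

lemma exp_neg_abs_eq (a b : ℝ) :
    Real.exp (-|b - a|) = Real.exp (-a) * Real.exp (-b) * min (Real.exp (2*a)) (Real.exp (2*b)) := by
  have hm : min (Real.exp (2*a)) (Real.exp (2*b)) = Real.exp (min (2*a) (2*b)) :=
    (Real.exp_monotone.map_min).symm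
  rw [hm, ← Real.exp_add, ← Real.exp_add]
  congr 1
  rcases le_total a b with h | h
  · rw [abs_of_nonneg (by linarith), min_eq_left (by linarith)]; ring
  · rw [abs_of_nonpos (by linarith), min_eq_right (by linarith)]; ring

lemma step {ι : Type*} [Fintype ι] (K : ι → ι → ℝ)
    (hK : ∀ x : ι → ℝ, 0 ≤ ∑ i, ∑ j, x i * x j * K i j) (t : ι → ℝ) :
    ∀ x : ι → ℝ, 0 ≤ ∑ i, ∑ j, x i * x j * (K i j * Real.exp (-|t j - t i|)) := by
  intro x
  set χ : ι → ℝ → ℝ := fun i => Set.indicator (Set.Ioc 0 (Real.exp (2 * t i))) 1 with hχ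
  have hprod : ∀ i j : ι, (fun u => χ i u * χ j u)
      = Set.indicator (Set.Ioc 0 (min (Real.exp (2*t i)) (Real.exp (2*t j)))) (1 : ℝ → ℝ) := by
    intro i j
    funext u
    simp only [hχ, ← Set.inter_indicator_mul, Set.Ioc_inter_Ioc, max_self, Pi.one_apply, one_mul]
    rfl
  have hind : ∀ i j : ι, Integrable (fun u => χ i u * χ j u) volume := by
    intro i j; rw [hprod i j]; exact ind_integrable _
  have hint : ∀ i j : ι, ∫ u, χ i u * χ j u
      = min (Real.exp (2 * t i)) (Real.exp (2 * t j)) := by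
    intro i j
    rw [hprod i j, ind_integral _ (le_min (Real.exp_pos _).le (Real.exp_pos _).le)]
  have hterm : ∀ i j : ι, x i * x j * (K i j * Real.exp (-|t j - t i|))
      = ∫ u, (x i * Real.exp (-t i) * χ i u) * (x j * Real.exp (-t j) * χ j u) * K i j := by
    intro i j
    have heq : (fun u => (x i * Real.exp (-t i) * χ i u) * (x j * Real.exp (-t j) * χ j u) * K i j)
        = fun u => (x i * Real.exp (-t i) * (x j * Real.exp (-t j)) * K i j) * (χ i u * χ j u) := by
      funext u; ring
    rw [heq, integral_const_mul, hint i j, exp_neg_abs_eq]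
    ring
  have hintg : ∀ i j : ι, Integrable
      (fun u => (x i * Real.exp (-t i) * χ i u) * (x j * Real.exp (-t j) * χ j u) * K i j) volume := by
    intro i j
    have heq : (fun u => (x i * Real.exp (-t i) * χ i u) * (x j * Real.exp (-t j) * χ j u) * K i j)
        = fun u => (x i * Real.exp (-t i) * (x j * Real.exp (-t j)) * K i j) * (χ i u * χ j u) := by
      funext u; ring
    rw [heq]; exact (hind i j).const_mul _
  calc ∑ i, ∑ j, x i * x j * (K i j * Real.exp (-|t j - t i|))
      = ∫ u, ∑ i, ∑ j, (x i * Real.exp (-t i) * χ i u) * (x j * Real.exp (-t j) * χ j u) * K i j := by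
        rw [integral_finset_sum _ (fun i _ => integrable_finset_sum _ (fun j _ => hintg i j))]
        refine Finset.sum_congr rfl fun i _ => ?_
        rw [integral_finset_sum _ (fun j _ => hintg i j)]
        exact Finset.sum_congr rfl fun j _ => hterm i j
    _ ≥ 0 := integral_nonneg fun u => hK (fun i => x i * Real.exp (-t i) * χ i u)

lemma multi_pos {ι : Type*} [Fintype ι] (g : ι → ℕ → ℝ) (N : ℕ) :
    ∀ x : ι → ℝ, 0 ≤ ∑ i, ∑ j,
      x i * x j * Real.exp (-(∑ n ∈ Finset.range N, |g j n - g i n|)) := by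
  induction N with
  | zero =>
    intro x
    simp only [Finset.range_zero, Finset.sum_empty, neg_zero, Real.exp_zero, mul_one]
    have : ∑ i, ∑ j, x i * x j = (∑ i, x i) * (∑ j, x j) := by
      rw [Finset.sum_mul]
      exact Finset.sum_congr rfl fun i _ => by rw [Finset.mul_sum]
    rw [this]
    exact mul_self_nonneg _
  | succ N ih =>
    intro x
    have := step _ ih (fun i => g i N) x
    refine le_of_le_of_eq this (Finset.sum_congr rfl fun i _ => Finset.sum_congr rfl fun j _ => ?_)
    rw [Finset.sum_range_succ, neg_add, Real.exp_add]

lemma l1_hasSum (f : lp (fun _ : ℕ => ℝ) 1) : HasSum (fun n => |f n|) ‖f‖ := by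
  have h1 : HasSum (fun n => ‖f n‖ ^ (1 : ℝ≥0∞).toReal) (‖f‖ ^ (1 : ℝ≥0∞).toReal) :=
    lp.hasSum_norm (by norm_num) _
  simpa only [ENNReal.toReal_one, Real.rpow_one, Real.norm_eq_abs] using h1

set_option maxHeartbeats 1000000 in
lemma exp_norm_pos {ι : Type*} [Fintype ι] (g : ι → lp (fun _ : ℕ => ℝ) 1) :
    ∀ x : ι → ℝ, 0 ≤ ∑ i, ∑ j, x i * x j * Real.exp (-‖g j - g i‖) := by
  intro x
  have hnorm : ∀ i j : ι, Filter.Tendsto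
      (fun N => ∑ n ∈ Finset.range N, |g j n - g i n|) Filter.atTop (nhds ‖g j - g i‖) := by
    intro i j
    have h2 : HasSum (fun n => |g j n - g i n|) ‖g j - g i‖ := by
      refine (l1_hasSum (g j - g i)).congr_fun fun n => ?_
      simp [lp.coeFn_sub]
    exact h2.tendsto_sum_nat
  have htend : Filter.Tendsto
      (fun N => ∑ i, ∑ j, x i * x j * Real.exp (-(∑ n ∈ Finset.range N, |g j n - g i n|)))
      Filter.atTop (nhds (∑ i, ∑ j, x i * x j * Real.exp (-‖g j - g i‖))) := by
    refine tendsto_finset_sum _ fun i _ => tendsto_finset_sum _ fun j _ => ?_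
    exact (Real.continuous_exp.continuousAt.tendsto.comp (hnorm i j).neg).const_mul _
  exact ge_of_tendsto' htend fun N => multi_pos (fun i => (g i : ℕ → ℝ)) N x

open scoped ComplexOrder

/-- On the additive group of `ℓ¹(ℕ, ℝ)`, for every `ε > 0` the function
`p f = exp (-‖f‖₁)` is a continuous positive definite function with `p 0 = 1` and
`|1 - p f| ≥ 1 - exp (-ε)` whenever `‖f‖₁ ≥ ε`. -/
theorem l1_unitary_separation (ε : ℝ) (hε : 0 < ε) :
    ∃ p : lp (fun _ : ℕ => ℝ) 1 → ℂ,
      (p = fun f => (Real.exp (-‖f‖) : ℂ)) ∧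
      Continuous p ∧ p 0 = 1 ∧
      (∀ f, p (-f) = starRingEnd ℂ (p f)) ∧
      (∀ (n : ℕ) (g : Fin n → lp (fun _ : ℕ => ℝ) 1) (c : Fin n → ℂ),
        0 ≤ ∑ i, ∑ j, starRingEnd ℂ (c i) * c j * p (g j - g i)) ∧
      (∀ f, ε ≤ ‖f‖ → 1 - Real.exp (-ε) ≤ ‖1 - p f‖) := by
  refine ⟨fun f => (Real.exp (-‖f‖) : ℂ), rfl, ?_, ?_, ?_, ?_, ?_⟩
  · exact Complex.continuous_ofReal.comp (Real.continuous_exp.comp continuous_norm.neg)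
  · simp
  · intro f
    simp only [norm_neg]
    exact (Complex.conj_ofReal _).symm
  · intro n g c
    rw [Complex.nonneg_iff]
    constructor
    · -- real part
      have hre : (∑ i, ∑ j, starRingEnd ℂ (c i) * c j *
            ((Real.exp (-‖g j - g i‖) : ℝ) : ℂ)).re
          = ∑ i, ∑ j, ((c i).re * (c j).re + (c i).im * (c j).im)
              * Real.exp (-‖g j - g i‖) := by
        rw [Complex.re_sum]
        refine Finset.sum_congr rfl fun i _ => ?_
        rw [Complex.re_sum]
        refine Finset.sum_congr rfl fun j _ => ?_
        simp only [Complex.mul_re, Complex.mul_im, Complex.conj_re, Complex.conj_im,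
          Complex.ofReal_re, Complex.ofReal_im]
        ring
      rw [hre]
      have hsplit : ∑ i, ∑ j, ((c i).re * (c j).re + (c i).im * (c j).im)
            * Real.exp (-‖g j - g i‖)
          = (∑ i, ∑ j, (c i).re * (c j).re * Real.exp (-‖g j - g i‖))
            + ∑ i, ∑ j, (c i).im * (c j).im * Real.exp (-‖g j - g i‖) := by
        rw [← Finset.sum_add_distrib]
        refine Finset.sum_congr rfl fun i _ => ?_
        rw [← Finset.sum_add_distrib]
        refine Finset.sum_congr rfl fun j _ => by ring
      rw [hsplit]
      exact add_nonneg (exp_norm_pos g (fun i => (c i).re)) (exp_norm_pos g (fun i => (c i).im))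
    · -- imaginary part
      have him : (∑ i, ∑ j, starRingEnd ℂ (c i) * c j *
            ((Real.exp (-‖g j - g i‖) : ℝ) : ℂ)).im
          = ∑ i, ∑ j, ((c i).re * (c j).im - (c i).im * (c j).re)
              * Real.exp (-‖g j - g i‖) := by
        rw [Complex.im_sum]
        refine Finset.sum_congr rfl fun i _ => ?_
        rw [Complex.im_sum]
        refine Finset.sum_congr rfl fun j _ => ?_
        simp only [Complex.mul_re, Complex.mul_im, Complex.conj_re, Complex.conj_im,
          Complex.ofReal_re, Complex.ofReal_im]
        ring
      rw [him]
      have hskew : ∑ i, ∑ j, ((c i).re * (c j).im - (c i).im * (c j).re)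
            * Real.exp (-‖g j - g i‖)
          = -∑ i, ∑ j, ((c i).re * (c j).im - (c i).im * (c j).re)
              * Real.exp (-‖g j - g i‖) := by
        conv_lhs => rw [Finset.sum_comm]
        rw [← Finset.sum_neg_distrib]
        refine Finset.sum_congr rfl fun i _ => ?_
        rw [← Finset.sum_neg_distrib]
        refine Finset.sum_congr rfl fun j _ => ?_
        rw [norm_sub_rev]
        ring
      linarith [hskew]
  · intro f hf
    have h1 : Real.exp (-‖f‖) ≤ Real.exp (-ε) := Real.exp_le_exp.2 (by linarith : -‖f‖ ≤ -ε)
    have h2 : Real.exp (-ε) ≤ 1 := Real.exp_le_one_iff.2 (by linarith)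
    have : (1 : ℂ) - ((Real.exp (-‖f‖) : ℝ) : ℂ) = ((1 - Real.exp (-‖f‖) : ℝ) : ℂ) := by
      push_cast; ring
    rw [this, Complex.norm_real, Real.norm_eq_abs, abs_of_nonneg (by linarith)]
    linarith
end
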